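/- arXiv:2310.04870 — 6 statements merged into one kernel-verified Lean document; each statement's English description precedes it below -/
import Mathlib

section
/- If a property q is an invariant on program P, and q implies p with respect to P (i.e., p is an invariant on the program obtained from P by assuming q), then p is an invariant on P. -/
open scoped Classical

/-- An execution is a finite list of (state, line) pairs. -/
abbrev Execution (σ : Type*) := List (σ × ℕ)

/-- A program is a set of executions. -/
abbrev Program (σ : Type*) := Set (Execution σ)

/-- A property is a predicate on states together with a line number. -/
abbrev Property (σ : Type*) := (σ → Prop) × ℕ

/-- A property holds on an execution if its predicate is true at every
occurrence of its line. -/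
def holdsOn {σ : Type*} (p : Property σ) (e : Execution σ) : Prop :=
  ∀ pr ∈ e, pr.2 = p.2 → p.1 pr.1

/-- `p` is an invariant on `P` if it holds on every execution of `P`. -/
def isInvariant {σ : Type*} (P : Program σ) (p : Property σ) : Prop :=
  ∀ e ∈ P, holdsOn p e

/-- Truncate an execution at the first occurrence of `q`'s line where `q`'s
predicate fails. -/
noncomputable def truncAt {σ : Type*} (q : Property σ) : Execution σ → Execution σ
  | [] => []
  | a :: l => if a.2 = q.2 ∧ ¬ q.1 a.1 then [] else a :: truncAt q l

/-- The program `asm P q`: each execution of `P` truncated at the first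
failure of the assumption `q`. -/
noncomputable def asmP {σ : Type*} (P : Program σ) (q : Property σ) : Program σ :=
  (truncAt q) '' P

/-- `q` implies `p` with respect to `P`: `p` is an invariant on `asm(P, q)`. -/
noncomputable def impliesWrt {σ : Type*} (P : Program σ) (q p : Property σ) : Prop :=
  isInvariant (asmP P q) p

/-- `q` is stable for `P`: on each execution, `q`'s predicate is either true at
all occurrences of `q`'s line or false at all of them. -/
def isStable {σ : Type*} (P : Program σ) (q : Property σ) : Prop :=
  ∀ e ∈ P, (∀ pr ∈ e, pr.2 = q.2 → q.1 pr.1) ∨ (∀ pr ∈ e, pr.2 = q.2 → ¬ q.1 pr.1)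

/-- The negation of a property. -/
def pneg {σ : Type*} (q : Property σ) : Property σ := (fun s => ¬ q.1 s, q.2)


lemma truncAt_eq_self {σ : Type*} (q : Property σ) (e : Execution σ)
    (h : holdsOn q e) : truncAt q e = e := by
  induction e with
  | nil => rfl
  | cons a l ih =>
    rw [truncAt]
    have : ¬ (a.2 = q.2 ∧ ¬ q.1 a.1) := by
      rintro ⟨h1, h2⟩; exact h2 (h a List.mem_cons_self h1)
    rw [if_neg this, ih (fun pr hpr => h pr (List.mem_cons_of_mem _ hpr))]

/-- If `q` is an invariant on `P` and `q` implies `p` with respect to `P`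
(i.e. `p` is an invariant on `asm(P, q)`), then `p` is an invariant on `P`. -/
theorem stmt_0 {σ : Type*} (P : Program σ) (p q : Property σ)
    (hq : isInvariant P q) (himp : impliesWrt P q p) :
    isInvariant P p := by
  intro e he
  have := himp (truncAt q e) ⟨e, he, rfl⟩
  rwa [truncAt_eq_self q e (hq e he)] at this
end

section
/- Implication with respect to a program is transitive: if p implies q with respect to P and q implies r with respect to P, then p implies r with respect to P. -/
open scoped Classical

lemma truncAt_prefix {σ : Type*} (q : Property σ) (e : Execution σ) :
    truncAt q e <+: e := by
  induction e with
  | nil => simp [truncAt]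
  | cons a l ih =>
    by_cases h : a.2 = q.2 ∧ ¬ q.1 a.1
    · simp [truncAt, h]
    · simpa [truncAt, h] using ih

lemma prefix_truncAt {σ : Type*} (q : Property σ) :
    ∀ (l e : Execution σ), l <+: e → holdsOn q l → l <+: truncAt q e := by
  intro l
  induction l with
  | nil => intro e _ _; exact List.nil_prefix
  | cons a l ih =>
    intro e hpre hq
    obtain ⟨t, rfl⟩ := hpre
    have hqa : ¬ (a.2 = q.2 ∧ ¬ q.1 a.1) := by
      rintro ⟨h1, h2⟩; exact h2 (hq a (by simp) h1)
    rw [List.cons_append, truncAt]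
    simp only [hqa, if_false]
    exact List.cons_prefix_cons.mpr ⟨rfl, ih (l ++ t) ⟨t, rfl⟩ (fun pr h hl => hq pr (List.mem_cons_of_mem _ h) hl)⟩

lemma holdsOn_of_prefix {σ : Type*} (q : Property σ) {l e : Execution σ}
    (h : l <+: e) (hq : holdsOn q e) : holdsOn q l :=
  fun pr hm hl => hq pr (h.subset hm) hl

/-- Implication with respect to a program is transitive. -/
theorem stmt_3 {σ : Type*} (P : Program σ) (p q r : Property σ)
    (hpq : impliesWrt P p q) (hqr : impliesWrt P q r) :
    impliesWrt P p r := by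
  rintro e ⟨e0, he0, rfl⟩
  have hq : holdsOn q (truncAt p e0) := hpq _ ⟨e0, he0, rfl⟩
  have hr : holdsOn r (truncAt q e0) := hqr _ ⟨e0, he0, rfl⟩
  exact holdsOn_of_prefix r (prefix_truncAt q _ _ (truncAt_prefix p e0) hq) hr
end

section
/- Let q be a stable property for program P, meaning that on each execution of P, the predicate of q either evaluates true at every occurrence of q's line or evaluates false at every occurrence. If q implies p with respect to P and ¬q implies p with respect to P, then p is an invariant on P. -/
open scoped Classical

/-- If `q` is stable for `P`, `q` implies `p` w.r.t. `P`, and `¬q` implies `p`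
w.r.t. `P`, then `p` is an invariant on `P`. -/
theorem stmt_4 {σ : Type*} (P : Program σ) (p q : Property σ)
    (hs : isStable P q) (h1 : impliesWrt P q p) (h2 : impliesWrt P (pneg q) p) :
    isInvariant P p := by
  have trunc_eq : ∀ (r : Property σ) (e : Execution σ), holdsOn r e → truncAt r e = e := by
    intro r e h
    induction e with
    | nil => rfl
    | cons a l ih =>
      rw [truncAt]
      have ha : ¬ (a.2 = r.2 ∧ ¬ r.1 a.1) := by
        rintro ⟨h1, h2⟩
        exact h2 (h a List.mem_cons_self h1)
      rw [if_neg ha, ih (fun pr hpr => h pr (List.mem_cons_of_mem a hpr))]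
  intro e he
  rcases hs e he with h | h
  · have := trunc_eq q e h
    exact this ▸ h1 (truncAt q e) ⟨e, he, rfl⟩
  · have := trunc_eq (pneg q) e h
    exact this ▸ h2 (truncAt (pneg q) e) ⟨e, he, rfl⟩
end

section
/- In any configuration (P, A, T) reachable from (P, ∅, [p₀]) by valid Lemur rule applications, if the trail has the form T' ++ [p, q] (i.e., q immediately follows p), then q implies p with respect to P. -/
open scoped Classical

/-- Apply an optional assumption to a program. -/
noncomputable def asmOpt {σ : Type*} (P : Program σ) : Option (Property σ) → Program σ
  | none => P
  | some q => asmP P q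

/-- A verifier takes a program, an optional assumption and a property, and
returns `some true` (proven), `some false` (falsified) or `none` (unknown). -/
abbrev Verifier (σ : Type*) :=
  Program σ → Option (Property σ) → Property σ → Option Bool

/-- Configurations of the Lemur calculus: a triple of program, assumption set
(empty or singleton) and trail, or a terminal `success`/`fail` state. -/
inductive Conf (σ : Type*) where
  | state (P : Program σ) (A : Option (Property σ)) (T : List (Property σ))
  | success
  | fail

/-- The transition rules of the Lemur calculus, parameterized by a verifier
`V`, a proposal oracle `Ωp` and a repair oracle `Ωr`. -/
inductive LStep {σ : Type*} (V : Verifier σ)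
    (Ωp : Program σ → Property σ → Set (Property σ))
    (Ωr : Program σ → Property σ → Property σ → Option Bool → Set (Property σ)) :
    Conf σ → Conf σ → Prop where
  | propose {P A T' p q} (h1 : V P A p = none) (h2 : q ∈ Ωp P p) :
      LStep V Ωp Ωr (.state P A (T' ++ [p])) (.state P (some q) (T' ++ [p]))
  | decide {P q T' p} (h : V P (some q) p = some true) :
      LStep V Ωp Ωr (.state P (some q) (T' ++ [p])) (.state P none (T' ++ [p, q]))
  | backtrack {P A T' p q q'} (h1 : V P A q ≠ some true) (h2 : q' ∈ Ωp P p) :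
      LStep V Ωp Ωr (.state P A (T' ++ [p, q])) (.state P (some q') (T' ++ [p]))
  | repair1 {P q T' p q'} (h1 : V P (some q) p = none) (h2 : q' ∈ Ωr P p q none) :
      LStep V Ωp Ωr (.state P (some q) (T' ++ [p])) (.state P (some q') (T' ++ [p]))
  | repair2 {P T' p q q'} (h1 : V P none q = some false)
      (h2 : q' ∈ Ωr P p q (some false)) :
      LStep V Ωp Ωr (.state P none (T' ++ [p, q])) (.state P (some q') (T' ++ [p]))
  | success1 {P T' p} (h : V P none p = some true) :
      LStep V Ωp Ωr (.state P none (T' ++ [p])) .success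
  | success2 {P T' p q} (hs : isStable P q) (h : V P (some (pneg q)) p = some true) :
      LStep V Ωp Ωr (.state P none (T' ++ [p, q])) .success
  | fail {P A p} (h : V P A p = some false) :
      LStep V Ωp Ωr (.state P A [p]) .fail

/-- A configuration is reachable from another by a sequence of valid rule
applications. -/
def Reaches {σ : Type*} (V : Verifier σ)
    (Ωp : Program σ → Property σ → Set (Property σ))
    (Ωr : Program σ → Property σ → Property σ → Option Bool → Set (Property σ)) :
    Conf σ → Conf σ → Prop :=
  Relation.ReflTransGen (LStep V Ωp Ωr)

/-- The chain invariant on configurations. -/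
def stmt9Good {σ : Type*} : Conf σ → Prop
  | .state P _ T => List.Chain' (fun a b => impliesWrt P b a) T
  | _ => True

theorem stmt9_step {σ : Type*} {V : Verifier σ} {Ωp Ωr}
    (hV : ∀ (P : Program σ) (A : Option (Property σ)) (p : Property σ),
      V P A p = some true → isInvariant (asmOpt P A) p)
    {c c' : Conf σ} (hs : LStep V Ωp Ωr c c') (hg : stmt9Good c) : stmt9Good c' := by
  cases hs with
  | propose h1 h2 => exact hg
  | @decide P q T' p h =>
      have hip : impliesWrt P q p := hV P (some q) p h
      simp only [stmt9Good] at hg ⊢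
      have : T' ++ [p, q] = (T' ++ [p]) ++ [q] := by simp
      rw [this, List.Chain', List.isChain_append]
      refine ⟨hg, List.isChain_singleton _, ?_⟩
      intro x hx y hy
      simp at hy
      subst hy
      have : x = p := by simpa using hx.symm
      exact this ▸ hip
  | @backtrack P A T' p q q' h1 h2 =>
      simp only [stmt9Good] at hg ⊢
      exact hg.prefix ⟨[q], by simp⟩
  | repair1 h1 h2 => exact hg
  | @repair2 P T' p q q' h1 h2 =>
      simp only [stmt9Good] at hg ⊢
      exact hg.prefix ⟨[q], by simp⟩
  | success1 h => trivial
  | success2 hs h => trivial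
  | fail h => trivial

/-- In any configuration `(P, A, T)` reachable by valid Lemur rule
applications from `(P, ∅, [p₀])`, assuming the verifier is sound for positive
answers, if the trail has the form `T' ++ [p, q]`, then `q` implies `p` with
respect to `P`. -/

theorem stmt_9 {σ : Type*} (V : Verifier σ)
    (Ωp : Program σ → Property σ → Set (Property σ))
    (Ωr : Program σ → Property σ → Property σ → Option Bool → Set (Property σ))
    (hV : ∀ (P : Program σ) (A : Option (Property σ)) (p : Property σ),
      V P A p = some true → isInvariant (asmOpt P A) p)
    (P : Program σ) (p₀ : Property σ)
    (A : Option (Property σ)) (T' : List (Property σ)) (p q : Property σ)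
    (h : Reaches V Ωp Ωr (.state P none [p₀]) (.state P A (T' ++ [p, q]))) :
    impliesWrt P q p := by
  have key : ∀ c, Reaches V Ωp Ωr (.state P none [p₀]) c → stmt9Good c := by
    intro c hc
    induction hc with
    | refl => simp [stmt9Good, List.Chain']
    | tail _ hstep ih => exact stmt9_step hV hstep ih
  have hg := key _ h
  simp only [stmt9Good] at hg
  have : T' ++ [p, q] = (T' ++ [p]) ++ [q] := by simp
  rw [this, List.Chain', List.isChain_append] at hg
  exact hg.2.2 p (by simp) q (by simp)
end

section
/- Soundness of the Lemur calculus: if the Success state is reached by a sequence of valid rule applications starting from the configuration (P, ∅, [p₀]), then p₀ is an invariant on P. -/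
open scoped Classical

lemma truncAt_eq_self_s10 {σ : Type*} (q : Property σ) :
    ∀ e : Execution σ, (∀ pr ∈ e, pr.2 = q.2 → q.1 pr.1) → truncAt q e = e := by
  intro e
  induction e with
  | nil => intro _; rfl
  | cons a l ih =>
    intro h
    have ha : ¬ (a.2 = q.2 ∧ ¬ q.1 a.1) := by
      rintro ⟨h1, h2⟩; exact h2 (h a (by simp) h1)
    simp only [truncAt, if_neg ha]
    rw [ih (fun pr hpr => h pr (by simp [hpr]))]

lemma fact3 {σ : Type*} {P : Program σ} {q p : Property σ}
    (hq : isInvariant P q) (h : impliesWrt P q p) : isInvariant P p := by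
  intro e he
  have h2 := h (truncAt q e) ⟨e, he, rfl⟩
  rwa [truncAt_eq_self_s10 q e (hq e he)] at h2

lemma fact4 {σ : Type*} {P : Program σ} {q p : Property σ}
    (hs : isStable P q) (h1 : impliesWrt P q p) (h2 : impliesWrt P (pneg q) p) :
    isInvariant P p := by
  intro e he
  rcases hs e he with hq | hq
  · have ht : truncAt q e = e := truncAt_eq_self_s10 q e hq
    have := h1 (truncAt q e) ⟨e, he, rfl⟩
    rwa [ht] at this
  · have ht : truncAt (pneg q) e = e :=
      truncAt_eq_self_s10 (pneg q) e (fun pr hpr h2' => hq pr hpr h2')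
    have := h2 (truncAt (pneg q) e) ⟨e, he, rfl⟩
    rwa [ht] at this

lemma chain_head {σ : Type*} {P : Program σ} :
    ∀ (L : List (Property σ)) (a p : Property σ),
      List.Chain' (fun x y => impliesWrt P y x) (a :: L) →
      (a :: L).getLast? = some p → isInvariant P p → isInvariant P a := by
  intro L
  induction L with
  | nil =>
    intro a p _ hlast hp
    simp at hlast; rwa [hlast]
  | cons b L ih =>
    intro a p hc hlast hp
    unfold List.Chain' at hc; rw [List.isChain_cons_cons] at hc
    have hb : isInvariant P b := ih b p hc.2 (by simpa using hlast) hp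
    exact fact3 hb hc.1

lemma head?_app {α : Type*} {l l' : List α} {a : α} (h : l.head? = some a) :
    (l ++ l').head? = some a := by
  cases l <;> simp_all

/-- Soundness of the Lemur calculus: if the `success` state is reachable by
valid rule applications from `(P, ∅, [p₀])` and the verifier is sound for
positive answers, then `p₀` is an invariant on `P`. -/
theorem stmt_10 {σ : Type*} (V : Verifier σ)
    (Ωp : Program σ → Property σ → Set (Property σ))
    (Ωr : Program σ → Property σ → Property σ → Option Bool → Set (Property σ))
    (hV : ∀ (P : Program σ) (A : Option (Property σ)) (p : Property σ),
      V P A p = some true → isInvariant (asmOpt P A) p)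
    (P : Program σ) (p₀ : Property σ)
    (h : Reaches V Ωp Ωr (.state P none [p₀]) .success) :
    isInvariant P p₀ := by
  classical
  set Inv : Conf σ → Prop := fun c =>
    match c with
    | .state P' _ T => P' = P ∧ T.head? = some p₀ ∧
        List.Chain' (fun x y => impliesWrt P y x) T
    | .success => isInvariant P p₀
    | .fail => True with hInv
  suffices H : ∀ c, Reaches V Ωp Ωr (.state P none [p₀]) c → Inv c by
    exact H .success h
  intro c hc
  induction hc with
  | refl => exact ⟨rfl, rfl, List.isChain_singleton _⟩
  | tail _ hstep ih =>
    rename_i b c hab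
    cases hstep with
    | propose h1 h2 => exact ih
    | repair1 h1 h2 => exact ih
    | decide hd =>
      rename_i P' q T' p
      obtain ⟨hP, hhead, hchain⟩ := ih
      subst hP
      refine ⟨rfl, ?_, ?_⟩
      · have : T' ++ [p, q] = (T' ++ [p]) ++ [q] := by simp
        rw [this]; exact head?_app hhead
      · have : T' ++ [p, q] = (T' ++ [p]) ++ [q] := by simp
        rw [this]; unfold List.Chain'; rw [List.isChain_append]
        refine ⟨hchain, by simp, ?_⟩
        intro x hx y hy
        simp only [List.getLast?_concat, Option.mem_def, Option.some.injEq] at hx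
        simp only [List.head?_cons, Option.mem_def, Option.some.injEq] at hy
        subst hx; subst hy
        exact hV P' (some q) p hd
    | backtrack h1 h2 =>
      rename_i P' A T' p q q'
      obtain ⟨hP, hhead, hchain⟩ := ih
      subst hP
      have heq : T' ++ [p, q] = (T' ++ [p]) ++ [q] := by simp
      rw [heq] at hchain; unfold List.Chain' at hchain; rw [List.isChain_append] at hchain
      refine ⟨rfl, ?_, hchain.1⟩
      rw [heq] at hhead
      cases hT : (T' ++ [p]).head? with
      | none => rw [List.head?_eq_none_iff] at hT; simp at hT
      | some a =>
        have := head?_app (l' := [q]) hT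
        rw [this] at hhead
        exact hhead
    | repair2 h1 h2 =>
      rename_i P' T' p q q'
      obtain ⟨hP, hhead, hchain⟩ := ih
      subst hP
      have heq : T' ++ [p, q] = (T' ++ [p]) ++ [q] := by simp
      rw [heq] at hchain; unfold List.Chain' at hchain; rw [List.isChain_append] at hchain
      refine ⟨rfl, ?_, hchain.1⟩
      rw [heq] at hhead
      cases hT : (T' ++ [p]).head? with
      | none => rw [List.head?_eq_none_iff] at hT; simp at hT
      | some a =>
        have := head?_app (l' := [q]) hT
        rw [this] at hhead
        exact hhead
    | success1 hd =>
      rename_i P' T' p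
      obtain ⟨hP, hhead, hchain⟩ := ih
      subst hP
      have hp : isInvariant P' p := hV P' none p hd
      have hL : p₀ :: (T' ++ [p]).tail = T' ++ [p] := List.cons_head?_tail hhead
      rw [← hL] at hchain
      have hlast : (p₀ :: (T' ++ [p]).tail).getLast? = some p := by
        rw [hL]; exact List.getLast?_concat
      exact chain_head _ p₀ p hchain hlast hp
    | success2 hs hd =>
      rename_i P' T' p q
      obtain ⟨hP, hhead, hchain⟩ := ih
      subst hP
      have heq : T' ++ [p, q] = (T' ++ [p]) ++ [q] := by simp
      rw [heq] at hchain; unfold List.Chain' at hchain; rw [List.isChain_append] at hchain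
      obtain ⟨hc1, _, hrel⟩ := hchain
      have hqp : impliesWrt P' q p := by
        apply hrel p (by simp [List.getLast?_concat]) q (by simp)
      have hnp : impliesWrt P' (pneg q) p := hV P' (some (pneg q)) p hd
      have hp : isInvariant P' p := fact4 hs hqp hnp
      rw [heq] at hhead
      have hhead' : (T' ++ [p]).head? = some p₀ := by
        cases hT : (T' ++ [p]).head? with
        | none => rw [List.head?_eq_none_iff] at hT; simp at hT
        | some a =>
          have := head?_app (l' := [q]) hT
          rw [this] at hhead
          exact hhead
      have hL : p₀ :: (T' ++ [p]).tail = T' ++ [p] := List.cons_head?_tail hhead'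
      rw [← hL] at hc1
      have hlast : (p₀ :: (T' ++ [p]).tail).getLast? = some p := by
        rw [hL]; exact List.getLast?_concat
      exact chain_head _ p₀ p hc1 hlast hp
    | fail hd => trivial
end

section
/- Soundness for refutation: if the Fail state is reached by a sequence of valid Lemur rule applications starting from (P, ∅, [p₀]), then p₀ is not an invariant on P. -/
open scoped Classical

lemma mem_truncAt {σ : Type*} {q : Property σ} {a : σ × ℕ} :
    ∀ {l : Execution σ}, a ∈ truncAt q l → a ∈ l := by
  intro l
  induction l with
  | nil => simp [truncAt]
  | cons b l ih =>
    simp only [truncAt]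
    split
    · simp
    · intro h
      rcases List.mem_cons.1 h with h | h
      · exact h ▸ List.mem_cons_self
      · exact List.mem_cons_of_mem _ (ih h)

lemma invariant_asm {σ : Type*} {P : Program σ} {q p : Property σ}
    (h : isInvariant P p) : isInvariant (asmP P q) p := by
  rintro e ⟨e', he', rfl⟩ pr hpr hline
  exact h e' he' pr (mem_truncAt hpr) hline

def Good {σ : Type*} (P : Program σ) (p₀ : Property σ) : Conf σ → Prop
  | .state P' _ T => P' = P ∧ ∃ l, T = p₀ :: l
  | .success => True
  | .fail => ¬ isInvariant P p₀

/-- Soundness of the Lemur calculus for refutation: if the `fail` state is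
reachable by valid rule applications from `(P, ∅, [p₀])` and the verifier is
sound for negative answers, then `p₀` is not an invariant on `P`. -/
theorem stmt_11 {σ : Type*} (V : Verifier σ)
    (Ωp : Program σ → Property σ → Set (Property σ))
    (Ωr : Program σ → Property σ → Property σ → Option Bool → Set (Property σ))
    (hV : ∀ (P : Program σ) (A : Option (Property σ)) (p : Property σ),
      V P A p = some false → ¬ isInvariant (asmOpt P A) p)
    (P : Program σ) (p₀ : Property σ)
    (h : Reaches V Ωp Ωr (.state P none [p₀]) .fail) :
    ¬ isInvariant P p₀ := by
  suffices key : ∀ c, Reaches V Ωp Ωr (.state P none [p₀]) c → Good P p₀ c by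
    exact key _ h
  intro c hc
  induction hc with
  | refl => exact ⟨rfl, [], rfl⟩
  | tail _ step ih =>
    cases step with
    | propose h1 h2 => exact ih
    | repair1 h1 h2 => exact ih
    | @decide P' q T' p h =>
      obtain ⟨hP, l, hl⟩ := ih
      refine ⟨hP, l ++ [q], ?_⟩
      have : T' ++ [p, q] = (T' ++ [p]) ++ [q] := by simp
      rw [this, hl]; simp
    | @backtrack P' A T' p q q' h1 h2 =>
      obtain ⟨hP, l, hl⟩ := ih
      refine ⟨hP, ?_⟩
      cases T' with
      | nil => simp at hl; exact ⟨[], by simp [hl.1]⟩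
      | cons t rest => simp at hl; exact ⟨rest ++ [p], by simp [hl.1]⟩
    | @repair2 P' T' p q q' h1 h2 =>
      obtain ⟨hP, l, hl⟩ := ih
      refine ⟨hP, ?_⟩
      cases T' with
      | nil => simp at hl; exact ⟨[], by simp [hl.1]⟩
      | cons t rest => simp at hl; exact ⟨rest ++ [p], by simp [hl.1]⟩
    | success1 h => trivial
    | success2 hs h => trivial
    | @fail P' A p hf =>
      obtain ⟨hP, l, hl⟩ := ih
      subst hP
      have hp : p = p₀ := by
        cases hl; rfl
      subst hp
      have := hV _ A _ hf
      intro hinv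
      apply this
      cases A with
      | none => exact hinv
      | some q => exact invariant_asm hinv
end
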